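/- Let G be a group acting on a multiplicative abelian group A, and let α be a 3-cocycle on G with values in A. Then for every g ∈ G there exists a function γ : ℤ × ℤ → A such that for all l, m, n ∈ ℤ: γ(l+m, n) · γ(l, m) = γ(l, m+n) · (g^l • γ(m, n)) · α(g^l, g^m, g^n). (This is the statement that the pullback of α along the homomorphism ℤ → G, l ↦ g^l, is a coboundary, and shows that the induced map of inertia groupoids Λp : Λ𝒢 → ΛG is surjective on objects.) -/

import Mathlib

namespace ExistsCochainAux

variable {G A : Type*} [Group G] [CommGroup A] [MulDistribMulAction G A]

/-- forward part of the 2-cochain, first argument a natural number -/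
def F (α : G → G → G → A) (g : G) : ℕ → ℤ → A
  | 0, n => (α 1 1 (g ^ n))⁻¹
  | k + 1, n => g • F α g k n * α g (g ^ (k : ℤ)) (g ^ n)

/-- backward part: `Fneg k` represents the cochain at `-k` -/
def Fneg (α : G → G → G → A) (g : G) : ℕ → ℤ → A
  | 0, n => (α 1 1 (g ^ n))⁻¹
  | k + 1, n => g⁻¹ • (Fneg α g k n * (α g (g ^ (-(k : ℤ) - 1)) (g ^ n))⁻¹)

def gam (α : G → G → G → A) (g : G) : ℤ → ℤ → A
  | Int.ofNat k, n => F α g k n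
  | Int.negSucc k, n => Fneg α g (k + 1) n

lemma gam_step (α : G → G → G → A) (g : G) (l n : ℤ) :
    gam α g (l + 1) n = g • gam α g l n * α g (g ^ l) (g ^ n) := by
  rcases l with k | k
  · show gam α g (Int.ofNat k + 1) n = _
    rw [show (Int.ofNat k + 1 : ℤ) = Int.ofNat (k + 1) by simp]
    show F α g (k + 1) n = g • F α g k n * α g (g ^ (Int.ofNat k)) (g ^ n)
    rw [F]
    norm_num [Int.ofNat_eq_natCast]
  · rcases k with _ | j
    · show gam α g (Int.negSucc 0 + 1) n = _
      rw [show (Int.negSucc 0 + 1 : ℤ) = Int.ofNat 0 by rfl]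
      show F α g 0 n = g • Fneg α g 1 n * α g (g ^ (Int.negSucc 0)) (g ^ n)
      rw [Fneg, Fneg, F, smul_inv_smul,
        show (Int.negSucc 0 : ℤ) = -((0:ℕ):ℤ) - 1 by decide,
        inv_mul_cancel_right]
    · show gam α g (Int.negSucc (j+1) + 1) n = _
      rw [show (Int.negSucc (j+1) + 1 : ℤ) = Int.negSucc j by rfl]
      show Fneg α g (j + 1) n = g • Fneg α g (j + 2) n * _
      rw [show Fneg α g (j+2) n = g⁻¹ • (Fneg α g (j+1) n * (α g (g ^ (-((j+1 : ℕ) : ℤ) - 1)) (g ^ n))⁻¹) from rfl]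
      rw [smul_inv_smul,
        show (Int.negSucc (j+1) : ℤ) = -((j+1 : ℕ) : ℤ) - 1 by simp [Int.negSucc_eq]; ring,
        inv_mul_cancel_right]


lemma key (α : G → G → G → A)
    (hα : ∀ g h k l : G,
      (g • α h k l) * α g (h * k) l * α g h k = α (g * h) k l * α g h (k * l))
    (g : G) (l m n : ℤ) :
    g • α (g ^ l) (g ^ m) (g ^ n) * (α g (g ^ (l + m)) (g ^ n) * α g (g ^ l) (g ^ m)) =
      α (g ^ (l + 1)) (g ^ m) (g ^ n) * α g (g ^ l) (g ^ (m + n)) := by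
  have h := hα g (g ^ l) (g ^ m) (g ^ n)
  rw [← zpow_add, ← zpow_add, ← zpow_one_add, show (1 : ℤ) + l = l + 1 from add_comm 1 l,
    mul_assoc] at h
  exact h

lemma step_iff (α : G → G → G → A)
    (hα : ∀ g h k l : G,
      (g • α h k l) * α g (h * k) l * α g h k = α (g * h) k l * α g h (k * l))
    (g : G) (l m n : ℤ) :
    (gam α g (l + 1 + m) n * gam α g (l + 1) m =
      gam α g (l + 1) (m + n) * (g ^ (l + 1) • gam α g m n) *
        α (g ^ (l + 1)) (g ^ m) (g ^ n)) ↔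
    (gam α g (l + m) n * gam α g l m =
      gam α g l (m + n) * (g ^ l • gam α g m n) * α (g ^ l) (g ^ m) (g ^ n)) := by
  have hgl : g * g ^ l = g ^ (l + 1) := by
    rw [← zpow_one_add, add_comm]
  have hL : gam α g (l + 1 + m) n * gam α g (l + 1) m =
      g • (gam α g (l + m) n * gam α g l m) *
        (α g (g ^ (l + m)) (g ^ n) * α g (g ^ l) (g ^ m)) := by
    rw [show l + 1 + m = (l + m) + 1 by ring, gam_step, gam_step, smul_mul']
    ac_rfl
  have hR : gam α g (l + 1) (m + n) * (g ^ (l + 1) • gam α g m n) *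
        α (g ^ (l + 1)) (g ^ m) (g ^ n) =
      g • (gam α g l (m + n) * (g ^ l • gam α g m n) * α (g ^ l) (g ^ m) (g ^ n)) *
        (α g (g ^ (l + m)) (g ^ n) * α g (g ^ l) (g ^ m)) := by
    calc gam α g (l + 1) (m + n) * (g ^ (l + 1) • gam α g m n) *
          α (g ^ (l + 1)) (g ^ m) (g ^ n)
        = g • gam α g l (m + n) * (g ^ (l + 1) • gam α g m n) *
            (α (g ^ (l + 1)) (g ^ m) (g ^ n) * α g (g ^ l) (g ^ (m + n))) := by
          rw [gam_step]; ac_rfl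
      _ = g • gam α g l (m + n) * (g ^ (l + 1) • gam α g m n) *
            (g • α (g ^ l) (g ^ m) (g ^ n) *
              (α g (g ^ (l + m)) (g ^ n) * α g (g ^ l) (g ^ m))) := by
          rw [key α hα g l m n]
      _ = g • (gam α g l (m + n) * (g ^ l • gam α g m n) * α (g ^ l) (g ^ m) (g ^ n)) *
            (α g (g ^ (l + m)) (g ^ n) * α g (g ^ l) (g ^ m)) := by
          rw [smul_mul', smul_mul', ← mul_smul, hgl]; ac_rfl
  rw [hL, hR]
  constructor
  · intro h
    exact smul_left_cancel g (mul_right_cancel h)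
  · intro h
    rw [h]

lemma base (α : G → G → G → A)
    (hα : ∀ g h k l : G,
      (g • α h k l) * α g (h * k) l * α g h k = α (g * h) k l * α g h (k * l))
    (g : G) (m n : ℤ) :
    gam α g (0 + m) n * gam α g 0 m =
      gam α g 0 (m + n) * (g ^ (0 : ℤ) • gam α g m n) * α (g ^ (0 : ℤ)) (g ^ m) (g ^ n) := by
  have hA : ∀ k l : G, α 1 k l * α 1 1 k = α 1 1 (k * l) := by
    intro k l
    have h := hα 1 1 k l
    rw [one_smul, one_mul, one_mul, mul_assoc] at h
    exact mul_left_cancel h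
  have h0 : ∀ x : ℤ, gam α g 0 x = (α 1 1 (g ^ x))⁻¹ := fun x => rfl
  rw [zero_add, zpow_zero, one_smul, h0, h0]
  have hA' := hA (g ^ m) (g ^ n)
  rw [← zpow_add] at hA'
  calc gam α g m n * (α 1 1 (g ^ m))⁻¹
      = gam α g m n * ((α 1 1 (g ^ (m + n)))⁻¹ * (α 1 (g ^ m) (g ^ n) * α 1 1 (g ^ m)) *
          (α 1 1 (g ^ m))⁻¹) := by rw [hA', inv_mul_cancel, one_mul]
    _ = (α 1 1 (g ^ (m + n)))⁻¹ * gam α g m n * α 1 (g ^ m) (g ^ n) *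
          (α 1 1 (g ^ m) * (α 1 1 (g ^ m))⁻¹) := by ac_rfl
    _ = (α 1 1 (g ^ (m + n)))⁻¹ * gam α g m n * α 1 (g ^ m) (g ^ n) := by
          rw [mul_inv_cancel, mul_one]

end ExistsCochainAux

/-- Since `H³(ℤ, A) = 0`, the pullback of a 3-cocycle `α` on `G` along the
homomorphism `ℤ → G`, `l ↦ g^l`, is a coboundary: there is a 2-cochain
`γ : ℤ × ℤ → A` with `d_g γ = (l ↦ g^l)^* α`. This shows the induced map of
inertia groupoids `Λp : Λ𝒢 → ΛG` is surjective on objects. -/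
theorem exists_cochain_bounding_pullback_cocycle {G A : Type*} [Group G]
    [CommGroup A] [MulDistribMulAction G A]
    (α : G → G → G → A)
    (hα : ∀ g h k l : G,
      (g • α h k l) * α g (h * k) l * α g h k = α (g * h) k l * α g h (k * l))
    (g : G) :
    ∃ γ : ℤ × ℤ → A, ∀ l m n : ℤ,
      γ (l + m, n) * γ (l, m) =
        γ (l, m + n) * (g ^ l • γ (m, n)) * α (g ^ l) (g ^ m) (g ^ n) := by
  classical
  open ExistsCochainAux in
  refine ⟨fun p => gam α g p.1 p.2, fun l m n => ?_⟩
  show gam α g (l + m) n * gam α g l m =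
    gam α g l (m + n) * (g ^ l • gam α g m n) * α (g ^ l) (g ^ m) (g ^ n)
  induction l using Int.induction_on with
  | zero => exact base α hα g m n
  | succ i ih => exact (step_iff α hα g i m n).mpr ih
  | pred i ih =>
      refine (step_iff α hα g (-i - 1) m n).mp ?_
      have e : (-i : ℤ) - 1 + 1 = -i := by ring
      rw [e]
      exact ih
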